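/- arXiv:0711.1565 — 5 statements merged into one kernel-verified Lean document; each statement's English description precedes it below -/
import Mathlib

section
/- For a binary channel input alphabet 𝒳 = {x₁, x₂} ⊆ ℝ with x₁ ≠ x₂ and any finite nonempty interference alphabet 𝒮 ⊆ ℝ, there exist two functions t, r : 𝒮 → 𝒳 such that t(s₁) + s₁ ≠ r(s₂) + s₂ for all s₁, s₂ ∈ 𝒮; equivalently, there exist two input symbols of the associated channel with strictly positive distance d_SI(t,r) > 0. -/
/-!
Colour the line white or black by the parity of `⌊y / d⌋`, where `d = x₂ - x₁`, so that a shift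
by `d` swaps the two colours. For each `s`, exactly one of `x₁ + s`, `x₂ + s` is white: let `t s` be
the choice landing on white and `r s` the one landing on black. Then every `t s₁ + s₁` is white
and every `r s₂ + s₂` is black, so they never coincide.
-/

open Finset

/-- The distance `d_SI` between two input symbols `t, r` of the associated channel
(functions from the interference alphabet `S` to the channel input alphabet),
defined as the minimum over `s₁, s₂ ∈ S` of `|t s₁ + s₁ - (r s₂ + s₂)|`. -/
noncomputable def dSI (S : Finset ℝ) (hS : S.Nonempty) (t r : ℝ → ℝ) : ℝ :=
  (S ×ˢ S).inf' (hS.product hS) fun p => |t p.1 + p.1 - (r p.2 + p.2)|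

theorem even_floor_add_self_div_iff {K : Type*} [Field K] [LinearOrder K] [IsStrictOrderedRing K]
    [FloorRing K] {d : K} (hd : d ≠ 0) (y : K) :
    Even ⌊(y + d) / d⌋ ↔ ¬Even ⌊y / d⌋ := by
  rw [add_div, div_self hd, Int.floor_add_one, Int.even_add_one]

theorem exists_selectors_add_ne_of_flip {G : Type*} [AddCommGroup G] {x₁ x₂ : G} (P : G → Prop)
    (hP : ∀ y, P (y + (x₂ - x₁)) ↔ ¬P y) :
    ∃ t r : G → G, (∀ s, t s ∈ ({x₁, x₂} : Set G)) ∧ (∀ s, r s ∈ ({x₁, x₂} : Set G)) ∧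
      ∀ s₁ s₂, t s₁ + s₁ ≠ r s₂ + s₂ := by
  classical
  have hx₂ (s : G) : P (x₂ + s) ↔ ¬P (x₁ + s) := by
    rw [← hP]; congr! 1; abel
  let t s := if P (x₁ + s) then x₁ else x₂
  let r s := if P (x₁ + s) then x₂ else x₁
  have ht (s : G) : P (t s + s) := by
    by_cases h : P (x₁ + s) <;> simp [t, h, hx₂]
  have hr (s : G) : ¬P (r s + s) := by
    by_cases h : P (x₁ + s) <;> simp [r, h, hx₂]
  refine ⟨t, r, fun s => ?_, fun s => ?_, fun s₁ s₂ h => hr s₂ (h ▸ ht s₁)⟩ <;>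
    by_cases h : P (x₁ + s) <;> simp [t, r, h]

theorem dSI_pos_iff (S : Finset ℝ) (hS : S.Nonempty) (t r : ℝ → ℝ) :
    0 < dSI S hS t r ↔ ∀ s₁ ∈ S, ∀ s₂ ∈ S, t s₁ + s₁ ≠ r s₂ + s₂ := by
  simp only [dSI, lt_inf'_iff, mem_product, abs_pos, ne_eq, sub_eq_zero, and_imp, Prod.forall]
  exact ⟨fun h s₁ h₁ s₂ h₂ => h s₁ s₂ h₁ h₂, fun h s₁ s₂ h₁ h₂ => h s₁ h₁ s₂ h₂⟩

/-- For a binary channel input alphabet `{x₁, x₂}` with `x₁ ≠ x₂` and any finite nonempty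
interference alphabet `S`, there exist two symbols `t, r` of the associated channel with
`t s₁ + s₁ ≠ r s₂ + s₂` for all `s₁, s₂ ∈ S`; equivalently `d_SI(t, r) > 0`. -/
theorem stmt0 (x₁ x₂ : ℝ) (hx : x₁ ≠ x₂) (S : Finset ℝ) (hS : S.Nonempty) :
    ∃ t r : ℝ → ℝ, (∀ s ∈ S, t s ∈ ({x₁, x₂} : Set ℝ)) ∧
      (∀ s ∈ S, r s ∈ ({x₁, x₂} : Set ℝ)) ∧
      (∀ s₁ ∈ S, ∀ s₂ ∈ S, t s₁ + s₁ ≠ r s₂ + s₂) ∧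
      0 < dSI S hS t r := by
  obtain ⟨t, r, ht, hr, hne⟩ := exists_selectors_add_ne_of_flip (x₁ := x₁) (x₂ := x₂)
    (fun y => Even ⌊y / (x₂ - x₁)⌋) (even_floor_add_self_div_iff (sub_ne_zero.2 hx.symm))
  have hsep : ∀ s₁ ∈ S, ∀ s₂ ∈ S, t s₁ + s₁ ≠ r s₂ + s₂ := fun s₁ _ s₂ _ => hne s₁ s₂
  exact ⟨t, r, fun s _ => ht s, fun s _ => hr s, hsep, (dSI_pos_iff S hS t r).2 hsep⟩
end

section
/- Let 𝒳 = {x₁, x₂} with x₁ ≠ x₂, and let u₁, u₂ ∈ 𝒯 achieve the maximum of d_SI over all pairs of symbols of 𝒯, with d_SI(u₁,u₂) > 0. Fix any s ∈ 𝒮 and define the replacement map φ : 𝒯 → {u₁, u₂} by φ(t) = u₁ if t(s) = u₁(s) and φ(t) = u₂ otherwise. Then for every pair t, r ∈ 𝒯, d_SI(φ(t), φ(r)) ≥ d_SI(t,r). -/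
/-! If `t` and `r` are mapped to different symbols, `d_SI(φ t, φ r) = d_SI(u₁, u₂)` is the
maximal distance. If they are mapped to the same symbol, then `t s₀ = r s₀`: either both equal
`u₁ s₀`, or both are the other letter of the binary alphabet. Pairing `s₀` with itself then
gives `d_SI(t, r) = 0`. -/

open Finset

section dSI

variable (S : Finset ℝ) (hS : S.Nonempty)

lemma dSI_nonneg (t r : ℝ → ℝ) : 0 ≤ dSI S hS t r :=
  le_inf' _ _ fun _ _ => abs_nonneg _

lemma dSI_le_abs {s₁ s₂ : ℝ} (hs₁ : s₁ ∈ S) (hs₂ : s₂ ∈ S) (t r : ℝ → ℝ) :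
    dSI S hS t r ≤ |t s₁ + s₁ - (r s₂ + s₂)| :=
  inf'_le (fun p : ℝ × ℝ => |t p.1 + p.1 - (r p.2 + p.2)|) (b := (s₁, s₂)) (mem_product.2 ⟨hs₁, hs₂⟩)

lemma dSI_comm (t r : ℝ → ℝ) : dSI S hS t r = dSI S hS r t := by
  have key : ∀ a b : ℝ → ℝ, dSI S hS a b ≤ dSI S hS b a := fun a b =>
    le_inf' _ _ fun p hp => by
      rw [mem_product] at hp
      rw [abs_sub_comm]
      exact dSI_le_abs S hS hp.2 hp.1 a b
  exact le_antisymm (key t r) (key r t)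

lemma dSI_eq_zero_of_apply_eq {s : ℝ} (hs : s ∈ S) {t r : ℝ → ℝ} (h : t s = r s) :
    dSI S hS t r = 0 :=
  le_antisymm (by simpa [h] using dSI_le_abs S hS hs hs t r) (dSI_nonneg S hS t r)

end dSI

lemma eq_of_ne_of_mem_pair {α : Type*} {x₁ x₂ a b c : α} (ha : a ∈ ({x₁, x₂} : Set α))
    (hb : b ∈ ({x₁, x₂} : Set α)) (hc : c ∈ ({x₁, x₂} : Set α)) (hac : a ≠ c) (hbc : b ≠ c) :
    a = b := by
  simp only [Set.mem_insert_iff, Set.mem_singleton_iff] at ha hb hc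
  grind

theorem stmt3_general (x₁ x₂ : ℝ) (S : Finset ℝ) (hS : S.Nonempty)
    (u₁ u₂ : ℝ → ℝ)
    (hu₁ : ∀ s ∈ S, u₁ s ∈ ({x₁, x₂} : Set ℝ))
    (hmax : ∀ t r : ℝ → ℝ, (∀ s ∈ S, t s ∈ ({x₁, x₂} : Set ℝ)) →
      (∀ s ∈ S, r s ∈ ({x₁, x₂} : Set ℝ)) → dSI S hS t r ≤ dSI S hS u₁ u₂)
    (s₀ : ℝ) (hs₀ : s₀ ∈ S)
    (φ : (ℝ → ℝ) → (ℝ → ℝ))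
    (hφ : ∀ t : ℝ → ℝ, (t s₀ = u₁ s₀ → φ t = u₁) ∧ (t s₀ ≠ u₁ s₀ → φ t = u₂)) :
    ∀ t r : ℝ → ℝ, (∀ s ∈ S, t s ∈ ({x₁, x₂} : Set ℝ)) →
      (∀ s ∈ S, r s ∈ ({x₁, x₂} : Set ℝ)) →
      dSI S hS (φ t) (φ r) ≥ dSI S hS t r := by
  intro t r ht hr
  have of_apply_eq : t s₀ = r s₀ → dSI S hS t r ≤ dSI S hS (φ t) (φ r) := fun h =>
    (dSI_eq_zero_of_apply_eq S hS hs₀ h).trans_le (dSI_nonneg S hS _ _)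
  by_cases hts : t s₀ = u₁ s₀ <;> by_cases hrs : r s₀ = u₁ s₀
  · exact of_apply_eq (hts.trans hrs.symm)
  · rw [(hφ t).1 hts, (hφ r).2 hrs]
    exact hmax t r ht hr
  · rw [(hφ t).2 hts, (hφ r).1 hrs, dSI_comm S hS u₂, dSI_comm S hS t]
    exact hmax r t hr ht
  · exact of_apply_eq <|
      eq_of_ne_of_mem_pair (ht s₀ hs₀) (hr s₀ hs₀) (hu₁ s₀ hs₀) hts hrs

/-- Binary channel: let `u₁, u₂` achieve the maximum of `d_SI` over all pairs of symbols
of the associated channel, with `d_SI(u₁, u₂) > 0`. Fix `s₀ ∈ S` and let `φ` map `t` to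
`u₁` if `t s₀ = u₁ s₀` and to `u₂` otherwise. Then replacement never decreases distance:
`d_SI(φ t, φ r) ≥ d_SI(t, r)` for all `t, r ∈ 𝒯`. -/
theorem stmt3 (x₁ x₂ : ℝ) (hx : x₁ ≠ x₂) (S : Finset ℝ) (hS : S.Nonempty)
    (u₁ u₂ : ℝ → ℝ)
    (hu₁ : ∀ s ∈ S, u₁ s ∈ ({x₁, x₂} : Set ℝ))
    (hu₂ : ∀ s ∈ S, u₂ s ∈ ({x₁, x₂} : Set ℝ))
    (hmax : ∀ t r : ℝ → ℝ, (∀ s ∈ S, t s ∈ ({x₁, x₂} : Set ℝ)) →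
      (∀ s ∈ S, r s ∈ ({x₁, x₂} : Set ℝ)) → dSI S hS t r ≤ dSI S hS u₁ u₂)
    (hpos : 0 < dSI S hS u₁ u₂)
    (s₀ : ℝ) (hs₀ : s₀ ∈ S)
    (φ : (ℝ → ℝ) → (ℝ → ℝ))
    (hφ : ∀ t : ℝ → ℝ, (t s₀ = u₁ s₀ → φ t = u₁) ∧ (t s₀ ≠ u₁ s₀ → φ t = u₂)) :
    ∀ t r : ℝ → ℝ, (∀ s ∈ S, t s ∈ ({x₁, x₂} : Set ℝ)) →
      (∀ s ∈ S, r s ∈ ({x₁, x₂} : Set ℝ)) →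
      dSI S hS (φ t) (φ r) ≥ dSI S hS t r :=
  stmt3_general x₁ x₂ S hS u₁ u₂ hu₁ hmax s₀ hs₀ φ hφ
end

section
/- Let 𝒳 = {x₁, x₂} with x₁ ≠ x₂ and 𝒮 = {s₁, …, s_Q} with s₁ < s₂ < ⋯ < s_Q. If |sᵢ − sⱼ| ≥ |x₁ − x₂| for all i ≠ j, then there exist t, r ∈ 𝒯 with d_SI(t,r) = |x₁ − x₂|; in particular, the alternating functions t(s₂ₖ₊₁) = x₁, t(s₂ₖ) = x₂ and r(s₂ₖ₊₁) = x₂, r(s₂ₖ) = x₁ satisfy d_SI(t,r) = |x₁ − x₂|. -/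
/-! Write `d = |x₁ - x₂|`. Two sample points with an index between them are two gaps apart, so
`|s i - s j| ≥ 2d` whenever `i ≠ j` have the same parity, which outweighs the difference of at
most `d` between `t (s i)` and `r (s j)`; when the parities differ, `t (s i) = r (s j)` and the
gap `|s i - s j| ≥ d` alone gives the bound. The diagonal pairs `(s k, s k)` attain `d`. -/

open Finset

theorem dSI_le {S : Finset ℝ} (hS : S.Nonempty) (t r : ℝ → ℝ) {a b : ℝ} (ha : a ∈ S)
    (hb : b ∈ S) : dSI S hS t r ≤ |t a + a - (r b + b)| :=
  Finset.inf'_le _ (b := (a, b)) (Finset.mem_product.2 ⟨ha, hb⟩)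

theorem le_dSI_iff {S : Finset ℝ} (hS : S.Nonempty) (t r : ℝ → ℝ) {c : ℝ} :
    c ≤ dSI S hS t r ↔ ∀ a ∈ S, ∀ b ∈ S, c ≤ |t a + a - (r b + b)| := by
  simp only [dSI, Finset.le_inf'_iff, Finset.mem_product, and_imp, Prod.forall]
  exact ⟨fun h a ha b hb => h a b ha hb, fun h a b ha hb => h a ha b hb⟩

theorem le_abs_add_of_two_mul_le_abs {a b c : ℝ} (ha : 2 * c ≤ |a|) (hb : |b| ≤ c) :
    c ≤ |a + b| := by
  linarith [abs_sub_abs_le_abs_add a b]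

theorem two_mul_le_abs_sub_of_mod_two_eq {Q : ℕ} {s : Fin Q → ℝ} {d : ℝ} (hmono : StrictMono s)
    (hsep : ∀ i j : Fin Q, i ≠ j → |s i - s j| ≥ d) {i j : Fin Q} (hij : i ≠ j)
    (hpar : (i : ℕ) % 2 = (j : ℕ) % 2) : 2 * d ≤ |s i - s j| := by
  wlog hlt : i < j generalizing i j
  · rw [abs_sub_comm]
    exact this hij.symm hpar.symm (lt_of_le_of_ne (not_lt.1 hlt) hij.symm)
  let m : Fin Q := ⟨i + 1, by omega⟩
  have him : i < m := Fin.lt_def.2 (Nat.lt_succ_self _)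
  have hmj : m < j := Fin.lt_def.2 (by simp only [m]; omega)
  have h₁ := hsep i m him.ne
  have h₂ := hsep m j hmj.ne
  rw [abs_sub_comm, abs_of_pos (sub_pos.2 (hmono him))] at h₁
  rw [abs_sub_comm, abs_of_pos (sub_pos.2 (hmono hmj))] at h₂
  rw [abs_sub_comm, abs_of_pos (sub_pos.2 (hmono (him.trans hmj)))]
  linarith

theorem abs_ite_sub_ite_swap (p : Prop) [Decidable p] (x₁ x₂ : ℝ) :
    |(if p then x₁ else x₂) - (if p then x₂ else x₁)| = |x₁ - x₂| := by
  split_ifs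
  · rfl
  · exact abs_sub_comm _ _

theorem le_abs_alternating_sub_alternating {x₁ x₂ : ℝ} {Q : ℕ} {s : Fin Q → ℝ}
    (hmono : StrictMono s) (hsep : ∀ i j : Fin Q, i ≠ j → |s i - s j| ≥ |x₁ - x₂|)
    (i j : Fin Q) :
    |x₁ - x₂| ≤ |(if (i : ℕ) % 2 = 0 then x₁ else x₂) + s i -
      ((if (j : ℕ) % 2 = 0 then x₂ else x₁) + s j)| := by
  rcases eq_or_ne i j with rfl | hij
  · rw [add_sub_add_right_eq_sub, abs_ite_sub_ite_swap]
  set a := if (i : ℕ) % 2 = 0 then x₁ else x₂ with ha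
  set b := if (j : ℕ) % 2 = 0 then x₂ else x₁ with hb
  rcases eq_or_ne ((i : ℕ) % 2) ((j : ℕ) % 2) with hpar | hpar
  · have hab : |a - b| ≤ |x₁ - x₂| := by
      simp only [ha, hb]
      split_ifs <;> simp [abs_sub_comm]
    rw [show a + s i - (b + s j) = s i - s j + (a - b) by ring]
    exact le_abs_add_of_two_mul_le_abs
      (two_mul_le_abs_sub_of_mod_two_eq hmono hsep hij hpar) hab
  · have hab : a = b := by
      simp only [ha, hb]
      split_ifs <;> first | rfl | omega
    rw [hab, add_sub_add_left_eq_sub]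
    exact hsep i j hij

theorem dSI_alternating {x₁ x₂ : ℝ} {Q : ℕ} {s : Fin Q → ℝ} (hmono : StrictMono s)
    {S : Finset ℝ} (hSeq : S = Finset.image s Finset.univ) (hS : S.Nonempty)
    (hsep : ∀ i j : Fin Q, i ≠ j → |s i - s j| ≥ |x₁ - x₂|) {t r : ℝ → ℝ}
    (ht : ∀ k : Fin Q, t (s k) = if (k : ℕ) % 2 = 0 then x₁ else x₂)
    (hr : ∀ k : Fin Q, r (s k) = if (k : ℕ) % 2 = 0 then x₂ else x₁) :
    dSI S hS t r = |x₁ - x₂| := by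
  subst hSeq
  apply le_antisymm
  · obtain ⟨k, -, -⟩ := Finset.mem_image.1 hS.choose_spec
    have hk := Finset.mem_image_of_mem s (Finset.mem_univ k)
    calc dSI _ hS t r ≤ |t (s k) + s k - (r (s k) + s k)| := dSI_le hS t r hk hk
      _ = |x₁ - x₂| := by rw [ht, hr, add_sub_add_right_eq_sub, abs_ite_sub_ite_swap]
  · simp only [le_dSI_iff, Finset.forall_mem_image, Finset.mem_univ, forall_const, ht, hr]
    exact le_abs_alternating_sub_alternating hmono hsep

theorem stmt6_general (x₁ x₂ : ℝ) (Q : ℕ)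
    (s : Fin Q → ℝ) (hmono : StrictMono s)
    (S : Finset ℝ) (hSeq : S = Finset.image s Finset.univ) (hS : S.Nonempty)
    (hsep : ∀ i j : Fin Q, i ≠ j → |s i - s j| ≥ |x₁ - x₂|) :
    (∀ t r : ℝ → ℝ,
        (∀ k : Fin Q, t (s k) = if (k : ℕ) % 2 = 0 then x₁ else x₂) →
        (∀ k : Fin Q, r (s k) = if (k : ℕ) % 2 = 0 then x₂ else x₁) →
        dSI S hS t r = |x₁ - x₂|) ∧
      ∃ t r : ℝ → ℝ, (∀ s' ∈ S, t s' ∈ ({x₁, x₂} : Set ℝ)) ∧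
        (∀ s' ∈ S, r s' ∈ ({x₁, x₂} : Set ℝ)) ∧ dSI S hS t r = |x₁ - x₂| := by
  refine ⟨fun t r ht hr => dSI_alternating hmono hSeq hS hsep ht hr, ?_⟩
  let t := Function.extend s (fun k : Fin Q => if (k : ℕ) % 2 = 0 then x₁ else x₂) fun _ => x₁
  let r := Function.extend s (fun k : Fin Q => if (k : ℕ) % 2 = 0 then x₂ else x₁) fun _ => x₁
  have ht : ∀ k, t (s k) = _ := hmono.injective.extend_apply _ _
  have hr : ∀ k, r (s k) = _ := hmono.injective.extend_apply _ _
  have hmem : ∀ f : ℝ → ℝ, (∀ k, f (s k) = x₁ ∨ f (s k) = x₂) →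
      ∀ s' ∈ S, f s' ∈ ({x₁, x₂} : Set ℝ) := by
    rintro f hf _ hs'
    obtain ⟨k, -, rfl⟩ := Finset.mem_image.1 (hSeq ▸ hs')
    exact hf k
  refine ⟨t, r, hmem t fun k => ?_, hmem r fun k => ?_, dSI_alternating hmono hSeq hS hsep ht hr⟩
  · rw [ht]; split_ifs <;> simp
  · rw [hr]; split_ifs <;> simp

/-- Binary alphabet `{x₁, x₂}`, `x₁ ≠ x₂`, and `S = {s 0 < s 1 < ⋯ < s (Q-1)}`. If all
gaps satisfy `|s i - s j| ≥ |x₁ - x₂|` for `i ≠ j`, then the alternating functions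
(`t` equal to `x₁` on odd-numbered symbols `s₁, s₃, …` — i.e. even 0-based indices —
and `x₂` elsewhere, and `r` reversed) achieve `d_SI(t, r) = |x₁ - x₂|`; in particular
two symbols of `𝒯` at distance exactly `|x₁ - x₂|` exist. -/
theorem stmt6 (x₁ x₂ : ℝ) (hx : x₁ ≠ x₂) (Q : ℕ) (hQ : 0 < Q)
    (s : Fin Q → ℝ) (hmono : StrictMono s)
    (S : Finset ℝ) (hSeq : S = Finset.image s Finset.univ) (hS : S.Nonempty)
    (hsep : ∀ i j : Fin Q, i ≠ j → |s i - s j| ≥ |x₁ - x₂|) :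
    (∀ t r : ℝ → ℝ,
        (∀ k : Fin Q, t (s k) = if (k : ℕ) % 2 = 0 then x₁ else x₂) →
        (∀ k : Fin Q, r (s k) = if (k : ℕ) % 2 = 0 then x₂ else x₁) →
        dSI S hS t r = |x₁ - x₂|) ∧
      ∃ t r : ℝ → ℝ, (∀ s' ∈ S, t s' ∈ ({x₁, x₂} : Set ℝ)) ∧
        (∀ s' ∈ S, r s' ∈ ({x₁, x₂} : Set ℝ)) ∧ dSI S hS t r = |x₁ - x₂| :=
  stmt6_general x₁ x₂ Q s hmono S hSeq hS hsep
end

section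
/- Let 𝒳 = {x₁, x₂} with x₁ ≠ x₂ and 𝒮 = {s₁, …, s_Q} ⊆ ℝ with Q ≥ 2. If there exist i ≠ j with |sᵢ − sⱼ| < |x₁ − x₂|, then every pair t, r ∈ 𝒯 satisfies d_SI(t,r) < |x₁ − x₂|. Combining with the other direction, the maximum of d_SI(t,r) over all pairs t, r ∈ 𝒯 equals |x₁ − x₂| if and only if min over i ≠ j of |sᵢ − sⱼ| ≥ |x₁ − x₂|. -/
open Finset

lemma aux_small (c g D : ℝ) (hc : |c| = D) (hg : |g| < D) (hg0 : g ≠ 0)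
    (h1 : D ≤ |c + g|) (h2 : D ≤ |c - g|) : False := by
  have hDpos : 0 < D := lt_of_le_of_lt (abs_nonneg g) hg
  have hc2 : c ^ 2 = D ^ 2 := by rw [← sq_abs, hc]
  have hg2 : g ^ 2 < D ^ 2 := by nlinarith [abs_nonneg g, sq_abs g]
  have h1' : D ^ 2 ≤ (c + g) ^ 2 := by
    nlinarith [sq_abs (c + g), abs_nonneg (c + g)]
  have h2' : D ^ 2 ≤ (c - g) ^ 2 := by
    nlinarith [sq_abs (c - g), abs_nonneg (c - g)]
  have hA : 0 ≤ 2 * c * g + g ^ 2 := by nlinarith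
  have hB : 0 ≤ g ^ 2 - 2 * c * g := by nlinarith
  have hAB := mul_nonneg hA hB
  have hgp : 0 < g ^ 2 := by positivity
  nlinarith [mul_pos (show (0:ℝ) < c ^ 2 - g ^ 2 by nlinarith) hgp]

lemma aux_triangle (c g D : ℝ) (hc : |c| = D) (hg : 2 * D ≤ |g|) : D ≤ |c + g| := by
  have h3 := abs_add_le (c + g) (-c)
  rw [abs_neg, hc] at h3
  have h2 : |g| ≤ |c + g| + D := by
    calc |g| = |c + g + -c| := by congr 1; ring
      _ ≤ |c + g| + D := h3
  linarith

/-- Binary alphabet `{x₁, x₂}`, `x₁ ≠ x₂`, `S = {s 0 < ⋯ < s (Q-1)}`, `Q ≥ 2`. If some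
gap satisfies `|s i - s j| < |x₁ - x₂|` (`i ≠ j`), then every pair `t, r ∈ 𝒯` has
`d_SI(t, r) < |x₁ - x₂|`. Combining with the other direction: the maximum of `d_SI`
over all pairs of symbols of `𝒯` equals `|x₁ - x₂|` (i.e. `|x₁ - x₂|` is an upper
bound that is attained) if and only if `min_{i ≠ j} |s i - s j| ≥ |x₁ - x₂|`. -/
theorem stmt7 (x₁ x₂ : ℝ) (hx : x₁ ≠ x₂) (Q : ℕ) (hQ : 2 ≤ Q)
    (s : Fin Q → ℝ) (hmono : StrictMono s)
    (S : Finset ℝ) (hSeq : S = Finset.image s Finset.univ) (hS : S.Nonempty) :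
    ((∃ i j : Fin Q, i ≠ j ∧ |s i - s j| < |x₁ - x₂|) →
      ∀ t r : ℝ → ℝ, (∀ s' ∈ S, t s' ∈ ({x₁, x₂} : Set ℝ)) →
        (∀ s' ∈ S, r s' ∈ ({x₁, x₂} : Set ℝ)) → dSI S hS t r < |x₁ - x₂|) ∧
    (((∀ t r : ℝ → ℝ, (∀ s' ∈ S, t s' ∈ ({x₁, x₂} : Set ℝ)) →
          (∀ s' ∈ S, r s' ∈ ({x₁, x₂} : Set ℝ)) → dSI S hS t r ≤ |x₁ - x₂|) ∧
        (∃ t r : ℝ → ℝ, (∀ s' ∈ S, t s' ∈ ({x₁, x₂} : Set ℝ)) ∧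
          (∀ s' ∈ S, r s' ∈ ({x₁, x₂} : Set ℝ)) ∧ dSI S hS t r = |x₁ - x₂|)) ↔
      (∀ i j : Fin Q, i ≠ j → |s i - s j| ≥ |x₁ - x₂|)) := by
  have hDpos : 0 < |x₁ - x₂| := abs_pos.2 (sub_ne_zero.2 hx)
  have hmem : ∀ i : Fin Q, s i ∈ S := by
    intro i; rw [hSeq]; exact mem_image_of_mem s (mem_univ i)
  have hdle : ∀ t r : ℝ → ℝ, ∀ a ∈ S, ∀ b ∈ S,
      dSI S hS t r ≤ |t a + a - (r b + b)| := by
    intro t r a ha b hb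
    unfold dSI
    have hab : (a, b) ∈ S ×ˢ S := mem_product.2 ⟨ha, hb⟩
    exact Finset.inf'_le (fun p => |t p.1 + p.1 - (r p.2 + p.2)|) hab
  -- Part 1
  have part1 : (∃ i j : Fin Q, i ≠ j ∧ |s i - s j| < |x₁ - x₂|) →
      ∀ t r : ℝ → ℝ, (∀ s' ∈ S, t s' ∈ ({x₁, x₂} : Set ℝ)) →
        (∀ s' ∈ S, r s' ∈ ({x₁, x₂} : Set ℝ)) → dSI S hS t r < |x₁ - x₂| := by
    rintro ⟨i, j, hij, hlt⟩ t r ht hr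
    have huv : s i ≠ s j := fun h => hij (hmono.injective h)
    have hu := hmem i; have hv := hmem j
    by_cases h1 : t (s i) = r (s i)
    · refine lt_of_le_of_lt (hdle t r (s i) hu (s i) hu) ?_
      rw [h1]; simpa using hDpos
    by_cases h2 : t (s j) = r (s j)
    · refine lt_of_le_of_lt (hdle t r (s j) hv (s j) hv) ?_
      rw [h2]; simpa using hDpos
    have htu := ht (s i) hu; have htv := ht (s j) hv
    have hru := hr (s i) hu; have hrv := hr (s j) hv
    simp only [Set.mem_insert_iff, Set.mem_singleton_iff] at htu htv hru hrv
    have hg0 : s i - s j ≠ 0 := sub_ne_zero.2 huv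
    rcases htu with htu | htu <;> rcases hru with hru | hru
    · exact absurd (htu.trans hru.symm) h1
    · -- t(si) = x₁, r(si) = x₂
      rcases htv with htv | htv <;> rcases hrv with hrv | hrv
      · exact absurd (htv.trans hrv.symm) h2
      · -- t(sj) = x₁, r(sj) = x₂ : constant case c = x₁ - x₂
        by_contra hcon
        push_neg at hcon
        have hA : |x₁ - x₂| ≤ |(x₁ - x₂) + (s i - s j)| := by
          have h := le_trans hcon (hdle t r (s i) hu (s j) hv)
          rw [htu, hrv, show x₁ + s i - (x₂ + s j) = (x₁ - x₂) + (s i - s j) from by ring] at h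
          exact h
        have hB : |x₁ - x₂| ≤ |(x₁ - x₂) - (s i - s j)| := by
          have h := le_trans hcon (hdle t r (s j) hv (s i) hu)
          rw [htv, hru, show x₁ + s j - (x₂ + s i) = (x₁ - x₂) - (s i - s j) from by ring] at h
          exact h
        exact aux_small (x₁ - x₂) (s i - s j) _ rfl hlt hg0 hA hB
      · -- t(sj) = x₂ = r(si) : pair (sj, si)
        refine lt_of_le_of_lt (hdle t r (s j) hv (s i) hu) ?_
        rw [htv, hru, show x₂ + s j - (x₂ + s i) = s j - s i from by ring]
        rwa [abs_sub_comm]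
      · exact absurd (htv.trans hrv.symm) h2
    · -- t(si) = x₂, r(si) = x₁
      rcases htv with htv | htv <;> rcases hrv with hrv | hrv
      · exact absurd (htv.trans hrv.symm) h2
      · -- t(sj) = x₁ = r(si)? no: t(si)=x₂=r(sj) : pair (si, sj)
        refine lt_of_le_of_lt (hdle t r (s i) hu (s j) hv) ?_
        rw [htu, hrv, show x₂ + s i - (x₂ + s j) = s i - s j from by ring]
        exact hlt
      · -- t(sj) = x₂, r(sj) = x₁ : constant case c = x₂ - x₁
        by_contra hcon
        push_neg at hcon
        have hcD : |x₂ - x₁| = |x₁ - x₂| := abs_sub_comm _ _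
        have hA : |x₁ - x₂| ≤ |(x₂ - x₁) + (s i - s j)| := by
          have h := le_trans hcon (hdle t r (s i) hu (s j) hv)
          rw [htu, hrv, show x₂ + s i - (x₁ + s j) = (x₂ - x₁) + (s i - s j) from by ring] at h
          exact h
        have hB : |x₁ - x₂| ≤ |(x₂ - x₁) - (s i - s j)| := by
          have h := le_trans hcon (hdle t r (s j) hv (s i) hu)
          rw [htv, hru, show x₂ + s j - (x₁ + s i) = (x₂ - x₁) - (s i - s j) from by ring] at h
          exact h
        exact aux_small (x₂ - x₁) (s i - s j) _ hcD hlt hg0 hA hB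
      · exact absurd (htv.trans hrv.symm) h2
    · exact absurd (htu.trans hru.symm) h1
  -- universal upper bound
  have hub : ∀ t r : ℝ → ℝ, (∀ s' ∈ S, t s' ∈ ({x₁, x₂} : Set ℝ)) →
      (∀ s' ∈ S, r s' ∈ ({x₁, x₂} : Set ℝ)) → dSI S hS t r ≤ |x₁ - x₂| := by
    intro t r ht hr
    obtain ⟨a, ha⟩ := hS
    have ha' : a ∈ S := ha
    refine le_trans (hdle t r a ha' a ha') ?_
    have h1 := ht a ha'; have h2 := hr a ha'
    simp only [Set.mem_insert_iff, Set.mem_singleton_iff] at h1 h2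
    rw [show t a + a - (r a + a) = t a - r a from by ring]
    rcases h1 with h1 | h1 <;> rcases h2 with h2 | h2 <;> simp only [h1, h2]
    · simp
    · exact le_refl _
    · exact le_of_eq (abs_sub_comm x₂ x₁)
    · simp
  refine ⟨part1, ?_, ?_⟩
  · -- forward direction of the iff
    rintro ⟨-, t, r, ht, hr, heq⟩ i j hij
    by_contra h
    push_neg at h
    have := part1 ⟨i, j, hij, h⟩ t r ht hr
    rw [heq] at this
    exact lt_irrefl _ this
  · -- construction direction
    intro hgap
    have half : ∀ k l : Fin Q, (k : ℕ) + 2 ≤ (l : ℕ) → 2 * |x₁ - x₂| ≤ s l - s k := by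
      intro k l h
      have hlQ : (l : ℕ) < Q := l.isLt
      have hltQ : (k : ℕ) + 1 < Q := by omega
      set m : Fin Q := ⟨(k : ℕ) + 1, hltQ⟩ with hm
      have hkm : k < m := by simp [hm, Fin.lt_def]
      have hml : m < l := by simp only [hm, Fin.lt_def]; omega
      have h1 : |x₁ - x₂| ≤ s m - s k := by
        have hne : m ≠ k := ne_of_gt hkm
        have := hgap m k hne
        rw [abs_of_pos (sub_pos.2 (hmono hkm))] at this
        linarith
      have h2 : |x₁ - x₂| ≤ s l - s m := by
        have hne : l ≠ m := ne_of_gt hml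
        have := hgap l m hne
        rw [abs_of_pos (sub_pos.2 (hmono hml))] at this
        linarith
      linarith
    have twogap : ∀ k l : Fin Q, k ≠ l → ((k : ℕ) % 2 = (l : ℕ) % 2) →
        2 * |x₁ - x₂| ≤ |s k - s l| := by
      intro k l hkl hpar
      rcases lt_or_gt_of_ne hkl with h | h
      · have h2 : (k : ℕ) + 2 ≤ (l : ℕ) := by
          have := (Fin.lt_def).1 h; omega
        rw [abs_sub_comm (s k) (s l), abs_of_pos (sub_pos.2 (hmono h))]
        exact half k l h2
      · have h2 : (l : ℕ) + 2 ≤ (k : ℕ) := by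
          have := (Fin.lt_def).1 h; omega
        rw [abs_of_pos (sub_pos.2 (hmono h))]
        exact half l k h2
    set t : ℝ → ℝ := fun x => if ∃ k : Fin Q, Even (k : ℕ) ∧ s k = x then x₂ else x₁
      with htdef
    set r : ℝ → ℝ := fun x => if ∃ k : Fin Q, Even (k : ℕ) ∧ s k = x then x₁ else x₂
      with hrdef
    have hkey : ∀ k : Fin Q, (∃ k' : Fin Q, Even (k' : ℕ) ∧ s k' = s k) ↔ Even (k : ℕ) := by
      intro k
      constructor
      · rintro ⟨k', hk', hsk⟩
        rwa [hmono.injective hsk] at hk'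
      · intro hk; exact ⟨k, hk, rfl⟩
    have htval : ∀ k : Fin Q, t (s k) = if Even (k : ℕ) then x₂ else x₁ := by
      intro k
      have e : t (s k) = if ∃ k' : Fin Q, Even (k' : ℕ) ∧ s k' = s k then x₂ else x₁ := rfl
      rw [e]
      by_cases hk : Even (k : ℕ)
      · rw [if_pos ((hkey k).2 hk), if_pos hk]
      · rw [if_neg fun h => hk ((hkey k).1 h), if_neg hk]
    have hrval : ∀ k : Fin Q, r (s k) = if Even (k : ℕ) then x₁ else x₂ := by
      intro k
      have e : r (s k) = if ∃ k' : Fin Q, Even (k' : ℕ) ∧ s k' = s k then x₁ else x₂ := rfl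
      rw [e]
      by_cases hk : Even (k : ℕ)
      · rw [if_pos ((hkey k).2 hk), if_pos hk]
      · rw [if_neg fun h => hk ((hkey k).1 h), if_neg hk]
    have htm : ∀ s' ∈ S, t s' ∈ ({x₁, x₂} : Set ℝ) := by
      intro s' _
      have e : t s' = if ∃ k : Fin Q, Even (k : ℕ) ∧ s k = s' then x₂ else x₁ := rfl
      rw [e]
      split
      · exact Or.inr rfl
      · exact Or.inl rfl
    have hrm : ∀ s' ∈ S, r s' ∈ ({x₁, x₂} : Set ℝ) := by
      intro s' _
      have e : r s' = if ∃ k : Fin Q, Even (k : ℕ) ∧ s k = s' then x₁ else x₂ := rfl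
      rw [e]
      split
      · exact Or.inl rfl
      · exact Or.inr rfl
    refine ⟨hub, t, r, htm, hrm, ?_⟩
    refine le_antisymm (hub t r htm hrm) ?_
    unfold dSI
    apply Finset.le_inf'
    rintro ⟨p1, p2⟩ hp
    rw [mem_product] at hp
    rw [hSeq] at hp
    obtain ⟨hp1, hp2⟩ := hp
    simp only [mem_image, mem_univ, true_and] at hp1 hp2
    obtain ⟨k, hk⟩ := hp1
    obtain ⟨l, hl⟩ := hp2
    subst hk hl
    show |x₁ - x₂| ≤ |t (s k) + s k - (r (s l) + s l)|
    rw [htval k, hrval l]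
    by_cases hk : Even (k : ℕ)
    · by_cases hl : Even (l : ℕ)
      · rw [if_pos hk, if_pos hl]
        by_cases hkl : k = l
        · subst hkl
          rw [show x₂ + s k - (x₁ + s k) = x₂ - x₁ from by ring, abs_sub_comm]
        · have h2 := twogap k l hkl (by
            have e1 := Nat.even_iff.1 hk; have e2 := Nat.even_iff.1 hl; omega)
          rw [show x₂ + s k - (x₁ + s l) = (x₂ - x₁) + (s k - s l) from by ring]
          exact aux_triangle _ _ _ (abs_sub_comm _ _) h2
      · rw [if_pos hk, if_neg hl]
        have hkl : k ≠ l := fun e => hl (e ▸ hk)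
        rw [show x₂ + s k - (x₂ + s l) = s k - s l from by ring]
        exact hgap k l hkl
    · by_cases hl : Even (l : ℕ)
      · rw [if_neg hk, if_pos hl]
        have hkl : k ≠ l := fun e => hk (e ▸ hl)
        rw [show x₁ + s k - (x₁ + s l) = s k - s l from by ring]
        exact hgap k l hkl
      · rw [if_neg hk, if_neg hl]
        by_cases hkl : k = l
        · subst hkl
          rw [show x₁ + s k - (x₂ + s k) = x₁ - x₂ from by ring]
        · have h2 := twogap k l hkl (by
            have e1 := Nat.not_even_iff.1 hk; have e2 := Nat.not_even_iff.1 hl; omega)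
          rw [show x₁ + s k - (x₂ + s l) = (x₁ - x₂) + (s k - s l) from by ring]
          exact aux_triangle _ _ _ rfl h2
end

section
/- Let 𝒳 ⊆ ℝ and 𝒮 ⊆ ℝ be finite, with min over distinct s, s' ∈ 𝒮 of |s − s'| ≥ 2 · max over x, x' ∈ 𝒳 of |x − x'|. Then for all x, z ∈ 𝒳, the no-side-information distance d(x,z) = min over s₁, s₂ ∈ 𝒮 of |x + s₁ − z − s₂| equals the Euclidean distance |x − z|. -/
open Finset

/-- The no-side-information distance `d(x, z) = min_{s₁, s₂ ∈ S} |x + s₁ - (z + s₂)|`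
between two channel input symbols when the interference is not known at the encoder. -/
noncomputable def dNSI (S : Finset ℝ) (hS : S.Nonempty) (x z : ℝ) : ℝ :=
  (S ×ˢ S).inf' (hS.product hS) fun p => |x + p.1 - (z + p.2)|

lemma abs_le_abs_add_of_two_mul_abs_le {α : Type*} [Ring α] [LinearOrder α] [IsOrderedRing α]
    {a b : α} (h : 2 * |b| ≤ |a|) : |b| ≤ |a + b| :=
  calc |b| = 2 * |b| - |b| := by rw [two_mul, add_sub_cancel_right]
    _ ≤ |a| - |b| := by gcongr
    _ ≤ |a + b| := abs_sub_abs_le_abs_add a b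

lemma dNSI_le_abs_sub (S : Finset ℝ) (hS : S.Nonempty) (x z : ℝ) : dNSI S hS x z ≤ |x - z| := by
  obtain ⟨s, hs⟩ := hS
  calc dNSI S ⟨s, hs⟩ x z ≤ |x + s - (z + s)| := inf'_le _ (mk_mem_product hs hs)
    _ = |x - z| := by rw [add_sub_add_right_eq_sub]

lemma dNSI_eq_abs_sub_of_two_mul_abs_le (S : Finset ℝ) (hS : S.Nonempty) {x z : ℝ}
    (hgap : ∀ s ∈ S, ∀ s' ∈ S, s ≠ s' → 2 * |x - z| ≤ |s - s'|) :
    dNSI S hS x z = |x - z| := by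
  refine (dNSI_le_abs_sub S hS x z).antisymm (le_inf' _ _ ?_)
  rintro ⟨s₁, s₂⟩ hp
  obtain ⟨hs₁, hs₂⟩ := mem_product.mp hp
  rw [show x + s₁ - (z + s₂) = (s₁ - s₂) + (x - z) by ring]
  by_cases h : s₁ = s₂
  · simp [h]
  · exact abs_le_abs_add_of_two_mul_abs_le (hgap s₁ hs₁ s₂ hs₂ h)

/-- If the minimum gap between distinct interference symbols is at least twice the
maximum spread of `X`, then for all `x, z ∈ X` the no-side-information distance
`d(x, z)` equals the Euclidean distance `|x - z|`. -/
theorem stmt10 (X S : Finset ℝ) (hS : S.Nonempty)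
    (hgap : ∀ s ∈ S, ∀ s' ∈ S, s ≠ s' → ∀ x ∈ X, ∀ x' ∈ X, |s - s'| ≥ 2 * |x - x'|) :
    ∀ x ∈ X, ∀ z ∈ X, dNSI S hS x z = |x - z| := fun x hx z hz =>
  dNSI_eq_abs_sub_of_two_mul_abs_le S hS fun s hs s' hs' hne => hgap s hs s' hs' hne x hx z hz
end
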